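/- Let R, S, T be monads on a category C, let λ : TS ⇒ ST and σ : SR ⇒ RS be weak distributive laws, and let τ : TR ⇒ RT be a distributive law, satisfying the Yang–Baxter equation σT ∘ Sτ ∘ λR = Rλ ∘ τS ∘ Tσ. Let κ^λ := Sμ^T ∘ λT ∘ η^T ST split as ι^λ ∘ π^λ with π^λ ∘ ι^λ = 1, giving the weak composite monad S •_λ T. Then ψ := Rπ^λ ∘ σT ∘ Sτ ∘ ι^λ R : (S•T)R ⇒ R(S•T) is a weak distributive law of R over S •_λ T. If, additionally, σ is a distributive law, then ψ is a distributive law. -/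

import Mathlib

open CategoryTheory

universe v u

/-- Raw monad data: an endofunctor together with unit and multiplication components
(the monad laws are not required). -/
structure MonadData (C : Type u) [Category.{v} C] where
  F : C ⥤ C
  unit : ∀ X : C, X ⟶ F.obj X
  mult : ∀ X : C, F.obj (F.obj X) ⟶ F.obj X

variable {C : Type u} [Category.{v} C]

/-- The data underlying a monad. -/
def CategoryTheory.Monad.data (T : Monad C) : MonadData C where
  F := T.toFunctor
  unit X := T.η.app X
  mult X := T.μ.app X

/-- The monad laws (two unitality axioms and associativity) for raw monad data. -/
def MonadData.IsMonad (A : MonadData C) : Prop :=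
  (∀ X : C, A.unit (A.F.obj X) ≫ A.mult X = 𝟙 (A.F.obj X)) ∧
  (∀ X : C, A.F.map (A.unit X) ≫ A.mult X = 𝟙 (A.F.obj X)) ∧
  (∀ X : C, A.F.map (A.mult X) ≫ A.mult X = A.mult (A.F.obj X) ≫ A.mult X)

/-- Axiom (η+) for a law `l : TS ⇒ ST` of the monad `A` (playing `S`) over `B` (playing `T`). -/
def EtaPlus (A B : MonadData C) (l : (A.F ⋙ B.F) ⟶ (B.F ⋙ A.F)) : Prop :=
  ∀ X : C, B.F.map (A.unit X) ≫ l.app X = A.unit (B.F.obj X)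

/-- Axiom (μ+): `λ ∘ Tμ^S = μ^S T ∘ Sλ ∘ λS`. -/
def MuPlus (A B : MonadData C) (l : (A.F ⋙ B.F) ⟶ (B.F ⋙ A.F)) : Prop :=
  ∀ X : C, B.F.map (A.mult X) ≫ l.app X =
    l.app (A.F.obj X) ≫ A.F.map (l.app X) ≫ A.mult (B.F.obj X)

/-- Axiom (η−): `λ ∘ η^T S = Sη^T`. -/
def EtaMinus (A B : MonadData C) (l : (A.F ⋙ B.F) ⟶ (B.F ⋙ A.F)) : Prop :=
  ∀ X : C, B.unit (A.F.obj X) ≫ l.app X = A.F.map (B.unit X)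

/-- Axiom (μ−): `λ ∘ μ^T S = Sμ^T ∘ λT ∘ Tλ`. -/
def MuMinus (A B : MonadData C) (l : (A.F ⋙ B.F) ⟶ (B.F ⋙ A.F)) : Prop :=
  ∀ X : C, B.mult (A.F.obj X) ≫ l.app X =
    B.F.map (l.app X) ≫ l.app (B.F.obj X) ≫ A.F.map (B.mult X)

/-- A weak distributive law satisfies (η+), (μ+) and (μ−). -/
def IsWDL (A B : MonadData C) (l : (A.F ⋙ B.F) ⟶ (B.F ⋙ A.F)) : Prop :=
  EtaPlus A B l ∧ MuPlus A B l ∧ MuMinus A B l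

/-- A distributive law satisfies all four axioms. -/
def IsDL (A B : MonadData C) (l : (A.F ⋙ B.F) ⟶ (B.F ⋙ A.F)) : Prop :=
  EtaPlus A B l ∧ MuPlus A B l ∧ EtaMinus A B l ∧ MuMinus A B l

/-- The natural family `κ := Sμ^T ∘ λT ∘ η^T ST : ST ⇒ ST` associated with a law. -/
def lawKappa (A B : MonadData C) (l : (A.F ⋙ B.F) ⟶ (B.F ⋙ A.F)) (X : C) :
    A.F.obj (B.F.obj X) ⟶ A.F.obj (B.F.obj X) :=
  B.unit (A.F.obj (B.F.obj X)) ≫ l.app (B.F.obj X) ≫ A.F.map (B.mult X)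

/-- The Yang–Baxter equation `σT ∘ Sτ ∘ λR = Rλ ∘ τS ∘ Tσ` for laws
`l : TS ⇒ ST`, `s : SR ⇒ RS`, `t : TR ⇒ RT`. -/
def YangBaxter (Rm Sm Tm : MonadData C)
    (l : (Sm.F ⋙ Tm.F) ⟶ (Tm.F ⋙ Sm.F))
    (s : (Rm.F ⋙ Sm.F) ⟶ (Sm.F ⋙ Rm.F))
    (t : (Rm.F ⋙ Tm.F) ⟶ (Tm.F ⋙ Rm.F)) : Prop :=
  ∀ X : C, l.app (Rm.F.obj X) ≫ Sm.F.map (t.app X) ≫ s.app (Tm.F.obj X) =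
    Tm.F.map (s.app X) ≫ t.app (Sm.F.obj X) ≫ Rm.F.map (l.app X)

/-- The composite monad data `S ∘_λ T = (ST, η^S η^T, μ^S μ^T ∘ SλT)` of a distributive law. -/
def compData (A B : MonadData C) (l : (A.F ⋙ B.F) ⟶ (B.F ⋙ A.F)) : MonadData C where
  F := B.F ⋙ A.F
  unit X := B.unit X ≫ A.unit (B.F.obj X)
  mult X := A.F.map (l.app (B.F.obj X)) ≫ A.F.map (A.F.map (B.mult X)) ≫ A.mult (B.F.obj X)

/-- The weak composite monad data `S •_λ T` built from a splitting `(K, p, i)` of `κ`. -/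
def wcompData (A B : MonadData C) (l : (A.F ⋙ B.F) ⟶ (B.F ⋙ A.F))
    (K : C ⥤ C) (p : (B.F ⋙ A.F) ⟶ K) (i : K ⟶ (B.F ⋙ A.F)) : MonadData C where
  F := K
  unit X := B.unit X ≫ A.unit (B.F.obj X) ≫ p.app X
  mult X := i.app (K.obj X) ≫ A.F.map (B.F.map (i.app X)) ≫ A.F.map (l.app (B.F.obj X)) ≫
    A.F.map (A.F.map (B.mult X)) ≫ A.mult (B.F.obj X) ≫ p.app X

section AuxChase

variable {C : Type u} [Category.{v} C] (R S T : Monad C)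
  (l : (S.toFunctor ⋙ T.toFunctor) ⟶ (T.toFunctor ⋙ S.toFunctor))
  (s : (R.toFunctor ⋙ S.toFunctor) ⟶ (S.toFunctor ⋙ R.toFunctor))
  (t : (R.toFunctor ⋙ T.toFunctor) ⟶ (T.toFunctor ⋙ R.toFunctor))

/-- `μ_S T ≫ κ = η_T SST ≫ l ST ≫ m`. -/
lemma aux_muS_kappa
    (hlp : ∀ X : C, T.map (S.μ.app X) ≫ l.app X =
      l.app (S.obj X) ≫ S.map (l.app X) ≫ S.μ.app (T.obj X)) (X : C) :
    S.μ.app (T.obj X) ≫ T.η.app (S.obj (T.obj X)) ≫ l.app (T.obj X) ≫ S.map (T.μ.app X) =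
      T.η.app (S.obj (S.obj (T.obj X))) ≫ l.app (S.obj (T.obj X)) ≫
        S.map (l.app (T.obj X)) ≫ S.map (S.map (T.μ.app X)) ≫ S.μ.app (T.obj X) := by
  have hη : ∀ {X Y : C} (f : X ⟶ Y), f ≫ T.η.app Y = T.η.app X ≫ T.map f :=
    fun f => by simpa using T.η.naturality f
  have μSn : ∀ {X Y : C} (f : X ⟶ Y), S.map (S.map f) ≫ S.μ.app Y = S.μ.app X ≫ S.map f :=
    fun f => by simpa using S.μ.naturality f
  slice_lhs 1 2 => rw [hη (S.μ.app (T.obj X))]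
  simp only [Functor.comp_obj, Category.assoc]
  slice_lhs 2 3 => rw [hlp (T.obj X)]
  simp only [Functor.comp_obj, Category.assoc]
  slice_lhs 4 5 => rw [← μSn (show T.obj (T.obj X) ⟶ T.obj X from T.μ.app X)]

/-- `κ(ST) ≫ m = m ≫ κ`. -/
lemma aux_kappa_m
    (hlp : ∀ X : C, T.map (S.μ.app X) ≫ l.app X =
      l.app (S.obj X) ≫ S.map (l.app X) ≫ S.μ.app (T.obj X))
    (hlm : ∀ X : C, T.μ.app (S.obj X) ≫ l.app X =
      T.map (l.app X) ≫ l.app (T.obj X) ≫ S.map (T.μ.app X)) (X : C) :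
    T.η.app (S.obj (T.obj (S.obj (T.obj X)))) ≫ l.app (T.obj (S.obj (T.obj X))) ≫
        S.map (T.μ.app (S.obj (T.obj X))) ≫
      S.map (l.app (T.obj X)) ≫ S.map (S.map (T.μ.app X)) ≫ S.μ.app (T.obj X) =
    S.map (l.app (T.obj X)) ≫ S.map (S.map (T.μ.app X)) ≫ S.μ.app (T.obj X) ≫
      T.η.app (S.obj (T.obj X)) ≫ l.app (T.obj X) ≫ S.map (T.μ.app X) := by
  have hη : ∀ {X Y : C} (f : X ⟶ Y), f ≫ T.η.app Y = T.η.app X ≫ T.map f :=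
    fun f => by simpa using T.η.naturality f
  have ln : ∀ {X Y : C} (f : X ⟶ Y), T.map (S.map f) ≫ l.app Y = l.app X ≫ S.map (T.map f) :=
    fun f => l.naturality f
  slice_rhs 3 6 => rw [aux_muS_kappa S T l hlp X]
  have e1 : S.map (T.μ.app (S.obj (T.obj X))) ≫ S.map (l.app (T.obj X)) =
      S.map (T.map (l.app (T.obj X))) ≫ S.map (l.app (T.obj (T.obj X))) ≫
        S.map (S.map (T.μ.app (T.obj X))) := by
    simp only [← Functor.map_comp, Category.assoc]
    rw [hlm (T.obj X)]
  slice_lhs 3 4 => rw [e1]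
  simp only [Category.assoc]
  have e2 : S.map (S.map (T.μ.app (T.obj X))) ≫ S.map (S.map (T.μ.app X)) =
      S.map (S.map (T.map (T.μ.app X))) ≫ S.map (S.map (T.μ.app X)) := by
    simp only [← Functor.map_comp]
    rw [← Monad.assoc]
  slice_lhs 5 6 => rw [e2]
  simp only [Category.assoc]
  have e3 : S.map (l.app (T.obj (T.obj X))) ≫ S.map (S.map (T.map (T.μ.app X))) =
      S.map (T.map (S.map (T.μ.app X))) ≫ S.map (l.app (T.obj X)) := by
    simp only [← Functor.map_comp]
    rw [← ln (show T.obj (T.obj X) ⟶ T.obj X from T.μ.app X)]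
  slice_lhs 4 5 => rw [e3]
  simp only [Category.assoc]
  slice_lhs 2 3 =>
    rw [← ln (show T.obj (S.obj (T.obj X)) ⟶ S.obj (T.obj (T.obj X)) from l.app (T.obj X))]
  simp only [Functor.comp_obj, Category.assoc]
  slice_lhs 3 4 =>
    rw [← ln (show S.obj (T.obj (T.obj X)) ⟶ S.obj (T.obj X) from S.map (T.μ.app X))]
  simp only [Functor.comp_obj, Category.assoc]
  slice_lhs 1 2 =>
    rw [← hη (show S.obj (T.obj (S.obj (T.obj X))) ⟶ S.obj (S.obj (T.obj (T.obj X))) from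
      S.map (l.app (T.obj X)))]
  simp only [Functor.comp_obj, Category.assoc]
  slice_lhs 2 3 =>
    rw [← hη (show S.obj (S.obj (T.obj (T.obj X))) ⟶ S.obj (S.obj (T.obj X)) from
      S.map (S.map (T.μ.app X)))]
  simp only [Functor.comp_obj, Category.assoc]

/-- (C1): `κR ≫ φ = φ ≫ Rκ`. -/
lemma aux_C1
    (hte : ∀ X : C, T.η.app (R.obj X) ≫ t.app X = R.map (T.η.app X))
    (htm : ∀ X : C, T.μ.app (R.obj X) ≫ t.app X =
      T.map (t.app X) ≫ t.app (T.obj X) ≫ R.map (T.μ.app X))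
    (yb : ∀ X : C, l.app (R.obj X) ≫ S.map (t.app X) ≫ s.app (T.obj X) =
      T.map (s.app X) ≫ t.app (S.obj X) ≫ R.map (l.app X)) (X : C) :
    T.η.app (S.obj (T.obj (R.obj X))) ≫ l.app (T.obj (R.obj X)) ≫
        S.map (T.μ.app (R.obj X)) ≫ S.map (t.app X) ≫ s.app (T.obj X) =
    S.map (t.app X) ≫ s.app (T.obj X) ≫
      R.map (T.η.app (S.obj (T.obj X)) ≫ l.app (T.obj X) ≫ S.map (T.μ.app X)) := by
  have hη : ∀ {X Y : C} (f : X ⟶ Y), f ≫ T.η.app Y = T.η.app X ≫ T.map f :=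
    fun f => by simpa using T.η.naturality f
  have ln : ∀ {X Y : C} (f : X ⟶ Y), T.map (S.map f) ≫ l.app Y = l.app X ≫ S.map (T.map f) :=
    fun f => l.naturality f
  have sn : ∀ {X Y : C} (f : X ⟶ Y), S.map (R.map f) ≫ s.app Y = s.app X ≫ R.map (S.map f) :=
    fun f => s.naturality f
  simp only [Category.assoc, Functor.map_comp]
  have e1 : S.map (T.μ.app (R.obj X)) ≫ S.map (t.app X) =
      S.map (T.map (t.app X)) ≫ S.map (t.app (T.obj X)) ≫ S.map (R.map (T.μ.app X)) := by
    simp only [← Functor.map_comp, Category.assoc]; rw [htm X]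
  slice_lhs 3 4 => rw [e1]
  simp only [Category.assoc]
  slice_lhs 5 6 => rw [sn (show T.obj (T.obj X) ⟶ T.obj X from T.μ.app X)]
  simp only [Functor.comp_obj, Category.assoc]
  slice_lhs 2 3 => rw [← ln (show T.obj (R.obj X) ⟶ R.obj (T.obj X) from t.app X)]
  simp only [Functor.comp_obj, Category.assoc]
  slice_lhs 3 5 => rw [yb (T.obj X)]
  simp only [Category.assoc]
  slice_lhs 1 2 =>
    rw [← hη (show S.obj (T.obj (R.obj X)) ⟶ S.obj (R.obj (T.obj X)) from S.map (t.app X))]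
  simp only [Functor.comp_obj, Category.assoc]
  slice_lhs 2 3 =>
    rw [← hη (show S.obj (R.obj (T.obj X)) ⟶ R.obj (S.obj (T.obj X)) from s.app (T.obj X))]
  simp only [Functor.comp_obj, Category.assoc]
  slice_lhs 3 4 => rw [hte (S.obj (T.obj X))]
  simp only [Category.assoc]

/-- (C2): `STμ_R ≫ φ = φR ≫ Rφ ≫ μ_R ST`. -/
lemma aux_C2
    (htp : ∀ X : C, T.map (R.μ.app X) ≫ t.app X =
      t.app (R.obj X) ≫ R.map (t.app X) ≫ R.μ.app (T.obj X))
    (hsp : ∀ X : C, S.map (R.μ.app X) ≫ s.app X =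
      s.app (R.obj X) ≫ R.map (s.app X) ≫ R.μ.app (S.obj X)) (X : C) :
    S.map (T.map (R.μ.app X)) ≫ S.map (t.app X) ≫ s.app (T.obj X) =
      (S.map (t.app (R.obj X)) ≫ s.app (T.obj (R.obj X))) ≫
        R.map (S.map (t.app X) ≫ s.app (T.obj X)) ≫ R.μ.app (S.obj (T.obj X)) := by
  have sn : ∀ {X Y : C} (f : X ⟶ Y), S.map (R.map f) ≫ s.app Y = s.app X ≫ R.map (S.map f) :=
    fun f => s.naturality f
  simp only [Category.assoc, Functor.map_comp]
  have e1 : S.map (T.map (R.μ.app X)) ≫ S.map (t.app X) =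
      S.map (t.app (R.obj X)) ≫ S.map (R.map (t.app X)) ≫ S.map (R.μ.app (T.obj X)) := by
    simp only [← Functor.map_comp, Category.assoc]; rw [htp X]
  slice_lhs 1 2 => rw [e1]
  simp only [Category.assoc]
  slice_lhs 3 4 => rw [hsp (T.obj X)]
  slice_lhs 2 3 => rw [sn (show T.obj (R.obj X) ⟶ R.obj (T.obj X) from t.app X)]
  simp only [Functor.comp_obj, Category.assoc]

/-- (C3): `mR ≫ φ = STφ ≫ φ(ST) ≫ Rm`. -/
lemma aux_C3
    (htm : ∀ X : C, T.μ.app (R.obj X) ≫ t.app X =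
      T.map (t.app X) ≫ t.app (T.obj X) ≫ R.map (T.μ.app X))
    (hsm : ∀ X : C, S.μ.app (R.obj X) ≫ s.app X =
      S.map (s.app X) ≫ s.app (S.obj X) ≫ R.map (S.μ.app X))
    (yb : ∀ X : C, l.app (R.obj X) ≫ S.map (t.app X) ≫ s.app (T.obj X) =
      T.map (s.app X) ≫ t.app (S.obj X) ≫ R.map (l.app X)) (X : C) :
    S.map (l.app (T.obj (R.obj X))) ≫ S.map (S.map (T.μ.app (R.obj X))) ≫
        S.μ.app (T.obj (R.obj X)) ≫ S.map (t.app X) ≫ s.app (T.obj X) =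
      S.map (T.map (S.map (t.app X) ≫ s.app (T.obj X))) ≫
        (S.map (t.app (S.obj (T.obj X))) ≫ s.app (T.obj (S.obj (T.obj X)))) ≫
        R.map (S.map (l.app (T.obj X)) ≫ S.map (S.map (T.μ.app X)) ≫ S.μ.app (T.obj X)) := by
  have ln : ∀ {X Y : C} (f : X ⟶ Y), T.map (S.map f) ≫ l.app Y = l.app X ≫ S.map (T.map f) :=
    fun f => l.naturality f
  have sn : ∀ {X Y : C} (f : X ⟶ Y), S.map (R.map f) ≫ s.app Y = s.app X ≫ R.map (S.map f) :=
    fun f => s.naturality f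
  have μSn : ∀ {X Y : C} (f : X ⟶ Y), S.map (S.map f) ≫ S.μ.app Y = S.μ.app X ≫ S.map f :=
    fun f => by simpa using S.μ.naturality f
  simp only [Category.assoc, Functor.map_comp]
  slice_lhs 3 4 => rw [← μSn (show T.obj (R.obj X) ⟶ R.obj (T.obj X) from t.app X)]
  simp only [Functor.comp_obj, Category.assoc]
  slice_lhs 4 5 => rw [hsm (T.obj X)]
  have e1 : S.map (S.map (T.μ.app (R.obj X))) ≫ S.map (S.map (t.app X)) =
      S.map (S.map (T.map (t.app X))) ≫ S.map (S.map (t.app (T.obj X))) ≫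
        S.map (S.map (R.map (T.μ.app X))) := by
    simp only [← Functor.map_comp, Category.assoc]; rw [htm X]
  slice_lhs 2 3 => rw [e1]
  simp only [Category.assoc]
  have e2 : S.map (S.map (R.map (T.μ.app X))) ≫ S.map (s.app (T.obj X)) =
      S.map (s.app (T.obj (T.obj X))) ≫ S.map (R.map (S.map (T.μ.app X))) := by
    simp only [← Functor.map_comp, Category.assoc]
    rw [sn (show T.obj (T.obj X) ⟶ T.obj X from T.μ.app X)]
  slice_lhs 4 5 => rw [e2]
  simp only [Category.assoc]
  have e3 : S.map (l.app (T.obj (R.obj X))) ≫ S.map (S.map (T.map (t.app X))) =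
      S.map (T.map (S.map (t.app X))) ≫ S.map (l.app (R.obj (T.obj X))) := by
    simp only [← Functor.map_comp, Category.assoc]
    rw [← ln (show T.obj (R.obj X) ⟶ R.obj (T.obj X) from t.app X)]
  slice_lhs 1 2 => rw [e3]
  simp only [Category.assoc]
  have e4 : S.map (l.app (R.obj (T.obj X))) ≫ S.map (S.map (t.app (T.obj X))) ≫
      S.map (s.app (T.obj (T.obj X))) =
      S.map (T.map (s.app (T.obj X))) ≫ S.map (t.app (S.obj (T.obj X))) ≫
        S.map (R.map (l.app (T.obj X))) := by
    simp only [← Functor.map_comp, Category.assoc]; rw [yb (T.obj X)]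
  slice_lhs 2 4 => rw [e4]
  simp only [Category.assoc]
  slice_lhs 5 6 =>
    rw [sn (show S.obj (T.obj (T.obj X)) ⟶ S.obj (T.obj X) from S.map (T.μ.app X))]
  simp only [Functor.comp_obj, Category.assoc]
  slice_lhs 4 5 =>
    rw [sn (show T.obj (S.obj (T.obj X)) ⟶ S.obj (T.obj (T.obj X)) from l.app (T.obj X))]
  simp only [Functor.comp_obj, Category.assoc]

/-- The units absorb κ. -/
lemma aux_unit_kappa
    (hle : ∀ X : C, T.map (S.η.app X) ≫ l.app X = S.η.app (T.obj X)) (Y : C) :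
    T.η.app Y ≫ S.η.app (T.obj Y) ≫ T.η.app (S.obj (T.obj Y)) ≫ l.app (T.obj Y) ≫
      S.map (T.μ.app Y) = T.η.app Y ≫ S.η.app (T.obj Y) := by
  have hη : ∀ {X Y : C} (f : X ⟶ Y), f ≫ T.η.app Y = T.η.app X ≫ T.map f :=
    fun f => by simpa using T.η.naturality f
  have hηS : ∀ {X Y : C} (f : X ⟶ Y), f ≫ S.η.app Y = S.η.app X ≫ S.map f :=
    fun f => by simpa using S.η.naturality f
  slice_lhs 2 3 => rw [hη (S.η.app (T.obj Y))]
  simp only [Functor.comp_obj, Category.assoc]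
  slice_lhs 3 4 => rw [hle (T.obj Y)]
  slice_lhs 3 4 => rw [← hηS (show T.obj (T.obj Y) ⟶ T.obj Y from T.μ.app Y)]
  simp only [Functor.comp_obj, Functor.id_obj, Category.assoc]
  slice_lhs 2 3 => rw [Monad.left_unit]
  simp

/-- Naturality of κ. -/
lemma aux_kappa_nat {A B : C} (f : A ⟶ B) :
    T.η.app (S.obj (T.obj A)) ≫ l.app (T.obj A) ≫ S.map (T.μ.app A) ≫
      S.map (T.map f) =
    S.map (T.map f) ≫ T.η.app (S.obj (T.obj B)) ≫ l.app (T.obj B) ≫ S.map (T.μ.app B) := by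
  have hη : ∀ {X Y : C} (f : X ⟶ Y), f ≫ T.η.app Y = T.η.app X ≫ T.map f :=
    fun f => by simpa using T.η.naturality f
  have ln : ∀ {X Y : C} (f : X ⟶ Y), T.map (S.map f) ≫ l.app Y = l.app X ≫ S.map (T.map f) :=
    fun f => l.naturality f
  have μTn : ∀ {X Y : C} (f : X ⟶ Y), T.map (T.map f) ≫ T.μ.app Y = T.μ.app X ≫ T.map f :=
    fun f => by simpa using T.μ.naturality f
  slice_rhs 1 2 => rw [hη (show S.obj (T.obj A) ⟶ S.obj (T.obj B) from S.map (T.map f))]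
  simp only [Functor.comp_obj, Category.assoc]
  slice_rhs 2 3 => rw [ln (show T.obj A ⟶ T.obj B from T.map f)]
  simp only [Functor.comp_obj, Category.assoc]
  have e1 : S.map (T.map (T.map f)) ≫ S.map (T.μ.app B) =
      S.map (T.μ.app A) ≫ S.map (T.map f) := by
    simp only [← Functor.map_comp]; rw [μTn f]
  slice_rhs 3 4 => rw [e1]

end AuxChase

section SecondComposite

variable {C : Type u} [Category.{v} C] (R S T : Monad C)

/-- The second composite law `ψ := Rπ^λ ∘ σT ∘ Sτ ∘ ι^λ R : (S•T)R ⇒ R(S•T)`. -/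
def psiLaw (s : (R.toFunctor ⋙ S.toFunctor) ⟶ (S.toFunctor ⋙ R.toFunctor))
    (t : (R.toFunctor ⋙ T.toFunctor) ⟶ (T.toFunctor ⋙ R.toFunctor))
    (K : C ⥤ C) (p : (T.toFunctor ⋙ S.toFunctor) ⟶ K) (i : K ⟶ (T.toFunctor ⋙ S.toFunctor)) :
    (R.toFunctor ⋙ K) ⟶ (K ⋙ R.toFunctor) :=
  Functor.whiskerLeft R.toFunctor i ≫ Functor.whiskerRight t S.toFunctor ≫
    Functor.whiskerLeft T.toFunctor s ≫ Functor.whiskerRight p R.toFunctor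

/-- Theorem 4.3 of the paper. If `λ : TS ⇒ ST` and `σ : SR ⇒ RS`
are weak distributive laws and `τ : TR ⇒ RT` is a distributive law, satisfying the
Yang–Baxter equation, and `(K, π^λ, ι^λ)` splits the idempotent `κ^λ`, then
`ψ := Rπ^λ ∘ σT ∘ Sτ ∘ ι^λ R` is a weak distributive law of `R` over `S •_λ T`.
If moreover `σ` is a distributive law, then `ψ` is a distributive law. -/
theorem second_composite_law
    (l : (S.toFunctor ⋙ T.toFunctor) ⟶ (T.toFunctor ⋙ S.toFunctor))
    (s : (R.toFunctor ⋙ S.toFunctor) ⟶ (S.toFunctor ⋙ R.toFunctor))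
    (t : (R.toFunctor ⋙ T.toFunctor) ⟶ (T.toFunctor ⋙ R.toFunctor))
    (hl : IsWDL S.data T.data l) (hs : IsWDL R.data S.data s) (ht : IsDL R.data T.data t)
    (yb : YangBaxter R.data S.data T.data l s t)
    (K : C ⥤ C) (p : (T.toFunctor ⋙ S.toFunctor) ⟶ K) (i : K ⟶ (T.toFunctor ⋙ S.toFunctor))
    (hsplit : ∀ X : C, p.app X ≫ i.app X = lawKappa S.data T.data l X)
    (hretract : ∀ X : C, i.app X ≫ p.app X = 𝟙 (K.obj X)) :
    IsWDL R.data (wcompData S.data T.data l K p i) (psiLaw R S T s t K p i) ∧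
    (EtaMinus R.data S.data s →
      IsDL R.data (wcompData S.data T.data l K p i) (psiLaw R S T s t K p i)) := by
  -- componentized hypotheses
  have hle : ∀ X : C, T.map (S.η.app X) ≫ l.app X = S.η.app (T.obj X) := hl.1
  have hlp : ∀ X : C, T.map (S.μ.app X) ≫ l.app X =
      l.app (S.obj X) ≫ S.map (l.app X) ≫ S.μ.app (T.obj X) := hl.2.1
  have hlm : ∀ X : C, T.μ.app (S.obj X) ≫ l.app X =
      T.map (l.app X) ≫ l.app (T.obj X) ≫ S.map (T.μ.app X) := hl.2.2
  have hsη : ∀ X : C, S.map (R.η.app X) ≫ s.app X = R.η.app (S.obj X) := hs.1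
  have hsp : ∀ X : C, S.map (R.μ.app X) ≫ s.app X =
      s.app (R.obj X) ≫ R.map (s.app X) ≫ R.μ.app (S.obj X) := hs.2.1
  have hsm : ∀ X : C, S.μ.app (R.obj X) ≫ s.app X =
      S.map (s.app X) ≫ s.app (S.obj X) ≫ R.map (S.μ.app X) := hs.2.2
  have htη : ∀ X : C, T.map (R.η.app X) ≫ t.app X = R.η.app (T.obj X) := ht.1
  have htp : ∀ X : C, T.map (R.μ.app X) ≫ t.app X =
      t.app (R.obj X) ≫ R.map (t.app X) ≫ R.μ.app (T.obj X) := ht.2.1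
  have hte : ∀ X : C, T.η.app (R.obj X) ≫ t.app X = R.map (T.η.app X) := ht.2.2.1
  have htm : ∀ X : C, T.μ.app (R.obj X) ≫ t.app X =
      T.map (t.app X) ≫ t.app (T.obj X) ≫ R.map (T.μ.app X) := ht.2.2.2
  have yb' : ∀ X : C, l.app (R.obj X) ≫ S.map (t.app X) ≫ s.app (T.obj X) =
      T.map (s.app X) ≫ t.app (S.obj X) ≫ R.map (l.app X) := yb
  have hsplit' : ∀ X : C, p.app X ≫ i.app X =
      T.η.app (S.obj (T.obj X)) ≫ l.app (T.obj X) ≫ S.map (T.μ.app X) := hsplit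
  have kp : ∀ X : C, T.η.app (S.obj (T.obj X)) ≫ l.app (T.obj X) ≫ S.map (T.μ.app X) ≫
      p.app X = p.app X := by
    intro X
    slice_lhs 1 3 => rw [← hsplit' X]
    slice_lhs 2 3 => rw [hretract X]
    simp
  have ik : ∀ X : C, i.app X ≫ T.η.app (S.obj (T.obj X)) ≫ l.app (T.obj X) ≫
      S.map (T.μ.app X) = i.app X := by
    intro X
    slice_lhs 2 4 => rw [← hsplit' X]
    slice_lhs 1 2 => rw [hretract X]
    simp
  have kpp : ∀ X : C, T.η.app (S.obj (T.obj (R.obj X))) ≫ l.app (T.obj (R.obj X)) ≫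
      S.map (T.μ.app (R.obj X)) ≫ S.map (t.app X) ≫ s.app (T.obj X) ≫ R.map (p.app X) =
      S.map (t.app X) ≫ s.app (T.obj X) ≫ R.map (p.app X) := by
    intro X
    rw [reassoc_of% (aux_C1 R S T l s t hte htm yb' X)]
    rw [← Functor.map_comp]
    simp only [Category.assoc]
    rw [kp X]
  have main1 : ∀ X : C, K.map (R.η.app X) ≫ i.app (R.obj X) ≫ S.map (t.app X) ≫
      s.app (T.obj X) ≫ R.map (p.app X) = R.η.app (K.obj X) := by
    intro X
    have inat : ∀ {A B : C} (f : A ⟶ B), K.map f ≫ i.app B = i.app A ≫ S.map (T.map f) :=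
      fun f => i.naturality f
    have hηR : ∀ {A B : C} (f : A ⟶ B), f ≫ R.η.app B = R.η.app A ≫ R.map f :=
      fun f => by simpa using R.η.naturality f
    slice_lhs 1 2 => rw [inat (R.η.app X)]
    simp only [Functor.id_obj, Category.assoc]
    have e1 : S.map (T.map (R.η.app X)) ≫ S.map (t.app X) = S.map (R.η.app (T.obj X)) := by
      simp only [← Functor.map_comp]; rw [htη X]
    slice_lhs 2 3 => rw [e1]
    slice_lhs 2 3 => rw [hsη (T.obj X)]
    slice_lhs 2 3 => rw [← hηR (show S.obj (T.obj X) ⟶ K.obj X from p.app X)]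
    slice_lhs 1 2 => rw [hretract X]
    simp
  have main2 : (∀ X : C, S.η.app (R.obj X) ≫ s.app X = R.map (S.η.app X)) → ∀ X : C,
      (T.η.app (R.obj X) ≫ S.η.app (T.obj (R.obj X)) ≫ p.app (R.obj X)) ≫ i.app (R.obj X) ≫
        S.map (t.app X) ≫ s.app (T.obj X) ≫ R.map (p.app X) =
      R.map (T.η.app X ≫ S.η.app (T.obj X) ≫ p.app X) := by
    intro hse X
    have hηS : ∀ {A B : C} (f : A ⟶ B), f ≫ S.η.app B = S.η.app A ≫ S.map f :=
      fun f => by simpa using S.η.naturality f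
    simp only [Category.assoc]
    slice_lhs 3 4 => rw [hsplit' (R.obj X)]
    simp only [Category.assoc]
    slice_lhs 1 5 => rw [aux_unit_kappa S T l hle (R.obj X)]
    simp only [Category.assoc]
    slice_lhs 2 3 => rw [← hηS (show T.obj (R.obj X) ⟶ R.obj (T.obj X) from t.app X)]
    simp only [Functor.comp_obj, Category.assoc]
    slice_lhs 3 4 => rw [hse (T.obj X)]
    slice_lhs 1 2 => rw [hte X]
    simp only [Functor.map_comp, Category.assoc]
  have main3 : ∀ X : C, K.map (R.μ.app X) ≫ i.app (R.obj X) ≫ S.map (t.app X) ≫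
      s.app (T.obj X) ≫ R.map (p.app X) =
      (i.app (R.obj (R.obj X)) ≫ S.map (t.app (R.obj X)) ≫ s.app (T.obj (R.obj X)) ≫
        R.map (p.app (R.obj X))) ≫
      R.map (i.app (R.obj X) ≫ S.map (t.app X) ≫ s.app (T.obj X) ≫ R.map (p.app X)) ≫
      R.μ.app (K.obj X) := by
    intro X
    have inat : ∀ {A B : C} (f : A ⟶ B), K.map f ≫ i.app B = i.app A ≫ S.map (T.map f) :=
      fun f => i.naturality f
    have μRn : ∀ {A B : C} (f : A ⟶ B), R.map (R.map f) ≫ R.μ.app B = R.μ.app A ≫ R.map f :=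
      fun f => by simpa using R.μ.naturality f
    slice_lhs 1 2 => rw [inat (R.μ.app X)]
    simp only [Functor.comp_obj, Category.assoc]
    slice_lhs 2 4 => rw [aux_C2 R S T s t htp hsp X]
    simp only [Functor.map_comp, Category.assoc]
    slice_lhs 6 7 => rw [← μRn (show S.obj (T.obj X) ⟶ K.obj X from p.app X)]
    simp only [Functor.comp_obj, Category.assoc]
    have key1 : p.app (R.obj X) ≫ i.app (R.obj X) ≫ S.map (t.app X) ≫ s.app (T.obj X) ≫
        R.map (p.app X) = S.map (t.app X) ≫ s.app (T.obj X) ≫ R.map (p.app X) := by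
      slice_lhs 1 2 => rw [hsplit' (R.obj X)]
      simp only [Category.assoc]
      rw [kpp X]
    have key1R := congrArg (fun g => R.map g) key1
    simp only [Functor.map_comp, Category.assoc] at key1R
    slice_rhs 4 8 => rw [key1R]
    simp only [Category.assoc]
  have main4 : ∀ X : C,
      (i.app (K.obj (R.obj X)) ≫ S.map (T.map (i.app (R.obj X))) ≫
        S.map (l.app (T.obj (R.obj X))) ≫ S.map (S.map (T.μ.app (R.obj X))) ≫
        S.μ.app (T.obj (R.obj X)) ≫ p.app (R.obj X)) ≫
        i.app (R.obj X) ≫ S.map (t.app X) ≫ s.app (T.obj X) ≫ R.map (p.app X) =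
      K.map (i.app (R.obj X) ≫ S.map (t.app X) ≫ s.app (T.obj X) ≫ R.map (p.app X)) ≫
        (i.app (R.obj (K.obj X)) ≫ S.map (t.app (K.obj X)) ≫ s.app (T.obj (K.obj X)) ≫
          R.map (p.app (K.obj X))) ≫
        R.map (i.app (K.obj X) ≫ S.map (T.map (i.app X)) ≫ S.map (l.app (T.obj X)) ≫
          S.map (S.map (T.μ.app X)) ≫ S.μ.app (T.obj X) ≫ p.app X) := by
    intro X
    have inat : ∀ {A B : C} (f : A ⟶ B), K.map f ≫ i.app B = i.app A ≫ S.map (T.map f) :=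
      fun f => i.naturality f
    have sn : ∀ {A B : C} (f : A ⟶ B), S.map (R.map f) ≫ s.app B = s.app A ≫ R.map (S.map f) :=
      fun f => s.naturality f
    have tn : ∀ {A B : C} (f : A ⟶ B), T.map (R.map f) ≫ t.app B = t.app A ≫ R.map (T.map f) :=
      fun f => t.naturality f
    -- LHS
    simp only [Category.assoc]
    slice_lhs 6 7 => rw [hsplit' (R.obj X)]
    simp only [Category.assoc]
    slice_lhs 6 11 => rw [kpp X]
    slice_lhs 3 7 => rw [aux_C3 R S T l s t htm hsm yb' X]
    simp only [Functor.map_comp, Category.assoc]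
    -- RHS
    slice_rhs 4 5 =>
      rw [inat (show R.obj (S.obj (T.obj X)) ⟶ R.obj (K.obj X) from R.map (p.app X))]
    simp only [Functor.comp_obj, Category.assoc]
    slice_rhs 3 4 =>
      rw [inat (show S.obj (R.obj (T.obj X)) ⟶ R.obj (S.obj (T.obj X)) from s.app (T.obj X))]
    simp only [Functor.comp_obj, Category.assoc]
    slice_rhs 2 3 =>
      rw [inat (show S.obj (T.obj (R.obj X)) ⟶ S.obj (R.obj (T.obj X)) from S.map (t.app X))]
    simp only [Functor.comp_obj, Category.assoc]
    slice_rhs 1 2 =>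
      rw [inat (show K.obj (R.obj X) ⟶ S.obj (T.obj (R.obj X)) from i.app (R.obj X))]
    simp only [Functor.comp_obj, Category.assoc]
    have key2 : p.app (K.obj X) ≫ i.app (K.obj X) ≫ S.map (T.map (i.app X)) ≫
        S.map (l.app (T.obj X)) ≫ S.map (S.map (T.μ.app X)) ≫ S.μ.app (T.obj X) ≫ p.app X =
        S.map (T.map (i.app X)) ≫ S.map (l.app (T.obj X)) ≫ S.map (S.map (T.μ.app X)) ≫
          S.μ.app (T.obj X) ≫ p.app X := by
      slice_lhs 1 2 => rw [hsplit' (K.obj X)]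
      simp only [Category.assoc]
      slice_lhs 1 4 => rw [aux_kappa_nat S T l (show K.obj X ⟶ S.obj (T.obj X) from i.app X)]
      simp only [Category.assoc]
      slice_lhs 2 7 => rw [aux_kappa_m S T l hlp hlm X]
      simp only [Category.assoc]
      slice_lhs 5 8 => rw [kp X]
    have key2R := congrArg (fun g => R.map g) key2
    simp only [Functor.map_comp, Category.assoc] at key2R
    slice_rhs 8 14 => rw [key2R]
    slice_rhs 7 8 =>
      rw [← sn (show T.obj (K.obj X) ⟶ T.obj (S.obj (T.obj X)) from T.map (i.app X))]
    simp only [Functor.comp_obj, Category.assoc]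
    have e5 : S.map (t.app (K.obj X)) ≫ S.map (R.map (T.map (i.app X))) =
        S.map (T.map (R.map (i.app X))) ≫ S.map (t.app (S.obj (T.obj X))) := by
      simp only [← Functor.map_comp]
      rw [← tn (show K.obj X ⟶ S.obj (T.obj X) from i.app X)]
    slice_rhs 6 7 => rw [e5]
    simp only [Category.assoc]
    have key3 : i.app (R.obj X) ≫ S.map (t.app X) ≫ s.app (T.obj X) ≫ R.map (p.app X) ≫
        R.map (i.app X) = i.app (R.obj X) ≫ S.map (t.app X) ≫ s.app (T.obj X) := by
      have e : R.map (p.app X) ≫ R.map (i.app X) =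
          R.map (T.η.app (S.obj (T.obj X)) ≫ l.app (T.obj X) ≫ S.map (T.μ.app X)) := by
        rw [← Functor.map_comp, hsplit' X]
      slice_lhs 4 5 => rw [e]
      rw [← aux_C1 R S T l s t hte htm yb' X]
      slice_lhs 1 4 => rw [ik (R.obj X)]
      simp only [Category.assoc]
    have key3R := congrArg (fun g => S.map (T.map g)) key3
    simp only [Functor.map_comp, Category.assoc] at key3R
    slice_rhs 2 6 => rw [key3R]
    simp only [Category.assoc]
  refine ⟨⟨fun X => ?_, fun X => ?_, fun X => ?_⟩,
    fun hse => ⟨fun X => ?_, fun X => ?_, fun X => ?_, fun X => ?_⟩⟩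
  · simp only [Monad.data, wcompData, psiLaw, NatTrans.comp_app, Functor.whiskerLeft_app,
      Functor.whiskerRight_app, Functor.comp_obj, Functor.comp_map, Category.assoc]
    exact main1 X
  · simp only [Monad.data, wcompData, psiLaw, NatTrans.comp_app, Functor.whiskerLeft_app,
      Functor.whiskerRight_app, Functor.comp_obj, Functor.comp_map, Category.assoc]
    simpa only [Category.assoc] using main3 X
  · simp only [Monad.data, wcompData, psiLaw, NatTrans.comp_app, Functor.whiskerLeft_app,
      Functor.whiskerRight_app, Functor.comp_obj, Functor.comp_map, Category.assoc]
    simpa only [Category.assoc] using main4 X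
  · simp only [Monad.data, wcompData, psiLaw, NatTrans.comp_app, Functor.whiskerLeft_app,
      Functor.whiskerRight_app, Functor.comp_obj, Functor.comp_map, Category.assoc]
    exact main1 X
  · simp only [Monad.data, wcompData, psiLaw, NatTrans.comp_app, Functor.whiskerLeft_app,
      Functor.whiskerRight_app, Functor.comp_obj, Functor.comp_map, Category.assoc]
    simpa only [Category.assoc] using main3 X
  · simp only [Monad.data, wcompData, psiLaw, NatTrans.comp_app, Functor.whiskerLeft_app,
      Functor.whiskerRight_app, Functor.comp_obj, Functor.comp_map, Category.assoc]
    simpa only [Category.assoc] using main2 hse X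
  · simp only [Monad.data, wcompData, psiLaw, NatTrans.comp_app, Functor.whiskerLeft_app,
      Functor.whiskerRight_app, Functor.comp_obj, Functor.comp_map, Category.assoc]
    simpa only [Category.assoc] using main4 X


end SecondComposite
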